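/- Let F ⊆ ℤ^d be finite, let v_0, …, v_{n−1} ∈ ℤ^d be arbitrary, and let s_0, …, s_{n−1} be n distinct points of ℤ^k such that S = {s_0, …, s_{n−1}} tiles ℤ^k by translations. Set X = {(v_j, s_j) : j = 0, …, n−1} ⊆ ℤ^{d+k} and F' = (F × {0}^k) + X (this sum is direct since the s_j are distinct). If F is an aperiodic translational tile of ℤ^d, then F' is an aperiodic translational tile of ℤ^{d+k}. -/

import Mathlib

open scoped Pointwise
/-- `F` tiles by translations along `A`: the translates `F + a`, `a ∈ A`, partition the
group, i.e. every element is in exactly one translate. -/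
def TilesZ {α : Type*} [AddCommGroup α] (F A : Set α) : Prop :=
  ∀ x : α, ∃! a, a ∈ A ∧ x - a ∈ F

/-- `A` is a periodic set: it is invariant under every element of some finite-index
subgroup. -/
def IsPeriodicZ {α : Type*} [AddCommGroup α] (A : Set α) : Prop :=
  ∃ Λ : AddSubgroup α, Λ.FiniteIndex ∧ ∀ l ∈ Λ, (fun a => a + l) '' A = A

/-- `F` is an aperiodic translational tile: it admits a tiling, but no periodic one. -/
def IsAperiodicTile {α : Type*} [AddCommGroup α] (F : Set α) : Prop :=
  (∃ A, TilesZ F A) ∧ ∀ A, TilesZ F A → ¬ IsPeriodicZ A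

theorem aperiodicity_preserving_operation {d k n : ℕ}
    (F : Set (Fin d → ℤ)) (hF : F.Finite)
    (v : Fin n → (Fin d → ℤ)) (s : Fin n → (Fin k → ℤ)) (hs : Function.Injective s)
    (hS : ∃ T : Set (Fin k → ℤ), TilesZ (Set.range s) T)
    (X : Set ((Fin d → ℤ) × (Fin k → ℤ))) (hX : X = Set.range fun j => (v j, s j))
    (F' : Set ((Fin d → ℤ) × (Fin k → ℤ)))
    (hF' : F' = (F ×ˢ ({0} : Set (Fin k → ℤ))) + X)
    (hap : IsAperiodicTile F) :
    IsAperiodicTile F' := by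
  subst hX hF'
  -- characterization of membership in F'
  have memF' : ∀ p : (Fin d → ℤ) × (Fin k → ℤ),
      p ∈ (F ×ˢ ({0} : Set (Fin k → ℤ))) + Set.range (fun j => (v j, s j)) ↔
        ∃ f ∈ F, ∃ j, p = (f + v j, s j) := by
    intro p
    constructor
    · rintro ⟨q, ⟨hq1, hq2⟩, r, ⟨j, rfl⟩, hsum⟩
      refine ⟨q.1, hq1, j, ?_⟩
      rw [← hsum]
      simp only [Set.mem_singleton_iff] at hq2
      ext i
      · rfl
      · simp [Prod.snd_add, hq2]
    · rintro ⟨f, hf, j, rfl⟩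
      exact ⟨(f, 0), ⟨hf, rfl⟩, (v j, s j), ⟨j, rfl⟩, by simp⟩
  constructor
  · -- existence of a tiling: A ×ˢ T
    obtain ⟨A, hA⟩ := hap.1
    obtain ⟨T, hT⟩ := hS
    refine ⟨A ×ˢ T, fun p => ?_⟩
    obtain ⟨x, y⟩ := p
    obtain ⟨t₀, ⟨ht₀T, j₀, hj₀⟩, ht₀u⟩ := hT y
    obtain ⟨a₀, ⟨ha₀A, ha₀F⟩, ha₀u⟩ := hA (x - v j₀)
    refine ⟨(a₀, t₀), ⟨⟨ha₀A, ht₀T⟩, ?_⟩, ?_⟩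
    · refine (memF' _).2 ⟨x - a₀ - v j₀, by
        have : x - a₀ - v j₀ = x - v j₀ - a₀ := by abel
        rw [this]; exact ha₀F, j₀, ?_⟩
      ext i
      · simp [sub_add_cancel]
      · exact congrFun hj₀.symm i
    · rintro ⟨a, t⟩ ⟨⟨haA, htT⟩, hmem⟩
      obtain ⟨f, hf, j, hj⟩ := (memF' _).1 hmem
      have hx : x - a = f + v j := congrArg Prod.fst hj
      have hy : y - t = s j := congrArg Prod.snd hj
      have ht : t = t₀ := ht₀u t ⟨htT, j, hy.symm⟩
      subst ht
      have hjj : j = j₀ := hs (hy.symm.trans hj₀.symm)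
      subst hjj
      have ha : a = a₀ := ha₀u a ⟨haA, by rw [sub_sub, add_comm (v j), ← sub_sub, hx]; simpa⟩
      simp [ha]
  · -- no tiling is periodic
    rintro A' hA' ⟨Λ', hΛ'fin, hΛ'inv⟩
    -- the induced tiling of F on the slice y = 0
    set A : Set (Fin d → ℤ) :=
      {b | ∃ a t j, (a, t) ∈ A' ∧ (0 : Fin k → ℤ) - t = s j ∧ b = a + v j} with hAdef
    have key : ∀ x : Fin d → ℤ, ∀ a t j, (a, t) ∈ A' → (0 : Fin k → ℤ) - t = s j → x - (a + v j) ∈ F →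
        ((x, (0 : Fin k → ℤ)) - (a, t)) ∈ (F ×ˢ ({0} : Set (Fin k → ℤ))) + Set.range (fun j => (v j, s j)) := by
      intro x a t j haA hts hF1
      refine (memF' _).2 ⟨x - (a + v j), hF1, j, ?_⟩
      ext i
      · simp [Prod.fst_sub, sub_add_cancel, sub_add_eq_sub_sub]
      · exact congrFun hts i
    have hAtiles : TilesZ F A := by
      intro x
      obtain ⟨⟨a₀, t₀⟩, ⟨hmemA', hmemF'⟩, hu⟩ := hA' (x, (0 : Fin k → ℤ))
      obtain ⟨f, hf, j₀, hj⟩ := (memF' _).1 hmemF'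
      have hx : x - a₀ = f + v j₀ := congrArg Prod.fst hj
      have hy : (0 : Fin k → ℤ) - t₀ = s j₀ := congrArg Prod.snd hj
      refine ⟨a₀ + v j₀, ⟨⟨a₀, t₀, j₀, hmemA', hy, rfl⟩, ?_⟩, ?_⟩
      · rw [← sub_sub, hx]; simpa
      · rintro b ⟨⟨a, t, j, haA, hts, rfl⟩, hbF⟩
        have := hu (a, t) ⟨haA, key x a t j haA hts hbF⟩
        have ha : a = a₀ := congrArg Prod.fst this
        have ht : t = t₀ := congrArg Prod.snd this
        subst ha ht
        have : j = j₀ := hs (hts.symm.trans hy)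
        rw [this]
    refine hap.2 A hAtiles ?_
    -- the projected period group
    refine ⟨Λ'.comap (AddMonoidHom.inl (Fin d → ℤ) (Fin k → ℤ)), ?_, ?_⟩
    · -- finite index
      have : Finite (((Fin d → ℤ) × (Fin k → ℤ)) ⧸ Λ') := Λ'.finite_quotient_of_finiteIndex
      have hinj : Function.Injective
          (fun q : (Fin d → ℤ) ⧸ Λ'.comap (AddMonoidHom.inl (Fin d → ℤ) (Fin k → ℤ)) =>
            Quotient.liftOn' q (fun x => ((AddMonoidHom.inl (Fin d → ℤ) (Fin k → ℤ) x : (Fin d → ℤ) × (Fin k → ℤ)) : ((Fin d → ℤ) × (Fin k → ℤ)) ⧸ Λ'))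
              (fun x y h => by
                refine QuotientAddGroup.eq.2 ?_
                have hxy : -x + y ∈ Λ'.comap (AddMonoidHom.inl (Fin d → ℤ) (Fin k → ℤ)) :=
                  QuotientAddGroup.leftRel_apply.1 h
                simpa using hxy)) := by
        intro q₁ q₂ h
        induction q₁ using Quotient.inductionOn'
        induction q₂ using Quotient.inductionOn'
        rename_i x y
        have : ((AddMonoidHom.inl (Fin d → ℤ) (Fin k → ℤ) x : (Fin d → ℤ) × (Fin k → ℤ)) : ((Fin d → ℤ) × (Fin k → ℤ)) ⧸ Λ') = (AddMonoidHom.inl (Fin d → ℤ) (Fin k → ℤ) y : (Fin d → ℤ) × (Fin k → ℤ)) := h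
        have hmem : -(AddMonoidHom.inl (Fin d → ℤ) (Fin k → ℤ) x) + AddMonoidHom.inl (Fin d → ℤ) (Fin k → ℤ) y ∈ Λ' :=
          QuotientAddGroup.eq.1 this
        refine Quotient.sound' (QuotientAddGroup.leftRel_apply.2 ?_)
        simpa using hmem
      have : Finite ((Fin d → ℤ) ⧸ Λ'.comap (AddMonoidHom.inl (Fin d → ℤ) (Fin k → ℤ))) := Finite.of_injective _ hinj
      exact AddSubgroup.finiteIndex_of_finite_quotient
    · -- invariance
      intro l hl
      have hl' : ((l, 0) : (Fin d → ℤ) × (Fin k → ℤ)) ∈ Λ' := hl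
      have hnl' : ((-l, 0) : (Fin d → ℤ) × (Fin k → ℤ)) ∈ Λ' := by
        have := Λ'.neg_mem hl'
        simpa using this
      ext b
      constructor
      · rintro ⟨c, ⟨a, t, j, haA, hts, rfl⟩, rfl⟩
        refine ⟨a + l, t, j, ?_, hts, by abel⟩
        have := hΛ'inv _ hl'
        rw [← this]
        exact ⟨(a, t), haA, by ext i <;> simp⟩
      · rintro ⟨a, t, j, haA, hts, rfl⟩
        refine ⟨(a - l) + v j, ⟨a - l, t, j, ?_, hts, rfl⟩, by abel⟩
        have := hΛ'inv _ hnl'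
        rw [← this]
        exact ⟨(a, t), haA, by ext i <;> simp [sub_eq_add_neg]⟩
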